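/- The entry-exit function is continuously differentiable: if f, g are C¹, f > 0, g(x₁) > 0, and ∫_{x₀}^{x₁} g/f = 0 with x₀ < 0 < x₁, then locally x₁ is a C¹ function of x₀ with derivative dx₁/dx₀ = (g(x₀)/f(x₀)) · (f(x₁)/g(x₁)), which is negative. -/

import Mathlib

theorem entry_exit_C1 (f g : ℝ → ℝ) (hf : ContDiff ℝ 1 f) (hg : ContDiff ℝ 1 g)
    (hfpos : ∀ x, 0 < f x)
    (hgneg : ∀ x < 0, g x < 0) (hgpos : ∀ x > 0, 0 < g x)
    (x₀ x₁ : ℝ) (hx₀ : x₀ < 0) (hx₁ : 0 < x₁)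
    (hroot : (∫ x in x₀..x₁, g x / f x) = 0) :
    ∃ δ > 0, ∃ φ : ℝ → ℝ,
      ContDiffOn ℝ 1 φ (Set.Ioo (x₀ - δ) (x₀ + δ)) ∧
      φ x₀ = x₁ ∧
      (∀ t ∈ Set.Ioo (x₀ - δ) (x₀ + δ),
        (∫ x in t..(φ t), g x / f x) = 0 ∧
        HasDerivAt φ (g t / f t * (f (φ t) / g (φ t))) t ∧
        g t / f t * (f (φ t) / g (φ t)) < 0) := by
  set h : ℝ → ℝ := fun x => g x / f x with hh
  have hcont : Continuous h := hg.continuous.div hf.continuous fun x => (hfpos x).ne'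
  have hint : ∀ a b : ℝ, IntervalIntegrable h MeasureTheory.volume a b := fun a b =>
    hcont.intervalIntegrable a b
  set G : ℝ → ℝ := fun t => ∫ x in (0:ℝ)..t, h x with hGdef
  have hGd : ∀ t, HasStrictDerivAt G (h t) t := fun t => hcont.integral_hasStrictDerivAt 0 t
  have hGC1 : ContDiff ℝ 1 G := by
    rw [contDiff_one_iff_deriv]
    constructor
    · exact fun t => ((hGd t).hasDerivAt).differentiableAt
    · have : deriv G = h := funext fun t => ((hGd t).hasDerivAt).deriv
      rw [this]; exact hcont
  -- positivity at x₁
  have hc : 0 < h x₁ := div_pos (hgpos x₁ hx₁) (hfpos x₁)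
  -- the derivative as a continuous linear equiv
  set f' : ℝ ≃L[ℝ] ℝ := ContinuousLinearEquiv.unitsEquivAut ℝ (Units.mk0 (h x₁) hc.ne')
  have hf' : HasFDerivAt G (f' : ℝ →L[ℝ] ℝ) x₁ := by
    have h1 := ((hGd x₁).hasDerivAt).hasFDerivAt
    refine h1.congr_fderiv ?_
    ext; simp [f']
  have hGc : ContDiffAt ℝ 1 G x₁ := hGC1.contDiffAt
  set ψ : ℝ → ℝ := hGc.localInverse hf' one_ne_zero with hψdef
  have hψC1 : ContDiffAt ℝ 1 ψ (G x₁) := hGc.to_localInverse hf' one_ne_zero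
  have hψx : ψ (G x₁) = x₁ := hGc.localInverse_apply_image hf' one_ne_zero
  have hright : ∀ᶠ y in nhds (G x₁), G (ψ y) = y :=
    (hGc.hasStrictFDerivAt' hf' one_ne_zero).eventually_right_inverse
  -- G x₁ = G x₀
  have hGx : G x₁ = G x₀ := by
    have h1 := intervalIntegral.integral_add_adjacent_intervals (hint 0 x₀) (hint x₀ x₁)
    have h2 : (∫ x in x₀..x₁, h x) = 0 := hroot
    simp only [hGdef]
    rw [← h1, h2, add_zero]
  set φ : ℝ → ℝ := fun t => ψ (G t) with hφdef
  have hφx₀ : φ x₀ = x₁ := by rw [hφdef]; simp only [← hGx, hψx]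
  have hψC1' : ContDiffAt ℝ 1 ψ (G x₀) := hGx ▸ hψC1
  have hφat : ContDiffAt ℝ 1 φ x₀ := hψC1'.comp x₀ hGC1.contDiffAt
  obtain ⟨u, hu, hφu⟩ := hφat.contDiffOn le_rfl (by simp)
  -- eventual conditions
  have hright' : ∀ᶠ y in nhds (G x₀), G (ψ y) = y := hGx ▸ hright
  have e₁ : ∀ᶠ t in nhds x₀, G (φ t) = G t :=
    (hGC1.continuous.continuousAt (x := x₀)).eventually hright'
  have e₂ : ∀ᶠ t in nhds x₀, t < 0 := eventually_lt_nhds hx₀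
  have e₃ : ∀ᶠ t in nhds x₀, 0 < φ t := by
    have : Filter.Tendsto φ (nhds x₀) (nhds x₁) := by
      rw [← hφx₀]; exact hφat.continuousAt
    exact this.eventually (eventually_gt_nhds hx₁)
  have hs : {t | G (φ t) = G t ∧ t < 0 ∧ 0 < φ t} ∩ u ∈ nhds x₀ :=
    Filter.inter_mem ((e₁.and (e₂.and e₃)) : _) hu
  obtain ⟨δ, hδpos, hδsub⟩ := Metric.mem_nhds_iff.1 hs
  refine ⟨δ, hδpos, φ, ?_, hφx₀, ?_⟩
  · refine (hφu.mono ?_)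
    intro t ht
    rw [← Real.ball_eq_Ioo] at ht
    exact (hδsub ht).2
  · intro t ht
    have htb : t ∈ Metric.ball x₀ δ := by rwa [Real.ball_eq_Ioo]
    obtain ⟨⟨hGφt, htneg, hφtpos⟩, htu⟩ := hδsub htb
    have hft : 0 < f t := hfpos t
    have hfφ : 0 < f (φ t) := hfpos (φ t)
    have hgt : g t < 0 := hgneg t htneg
    have hgφ : 0 < g (φ t) := hgpos (φ t) hφtpos
    have hint0 : (∫ x in t..(φ t), g x / f x) = 0 := by
      have h1 := intervalIntegral.integral_add_adjacent_intervals (hint t 0) (hint 0 (φ t))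
      have h2 : (∫ x in t..(0:ℝ), h x) = -G t := by
        rw [intervalIntegral.integral_symm]
      calc (∫ x in t..(φ t), g x / f x) = (∫ x in t..(φ t), h x) := rfl
        _ = (∫ x in t..(0:ℝ), h x) + (∫ x in (0:ℝ)..(φ t), h x) := h1.symm
        _ = -G t + G (φ t) := by rw [h2]
        _ = 0 := by rw [hGφt]; ring
    -- derivative
    have hdiffat : DifferentiableAt ℝ φ t := by
      exact (hφu.differentiableOn one_ne_zero).differentiableAt
        (Filter.mem_of_superset (IsOpen.mem_nhds Metric.isOpen_ball htb)
          fun z hz => (hδsub hz).2)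
    set d : ℝ := deriv φ t with hd
    have hdφ : HasDerivAt φ d t := hdiffat.hasDerivAt
    have hcomp : HasDerivAt (fun s => G (φ s)) (h (φ t) * d) t :=
      ((hGd (φ t)).hasDerivAt).comp t hdφ
    have hEq : (fun s => G (φ s)) =ᶠ[nhds t] G := by
      filter_upwards [IsOpen.mem_nhds Metric.isOpen_ball htb] with z hz
      exact (hδsub hz).1.1
    have hG' : HasDerivAt G (h (φ t) * d) t := hcomp.congr_of_eventuallyEq hEq.symm
    have huniq : h (φ t) * d = h t := hG'.unique (hGd t).hasDerivAt
    have hhφne : h (φ t) ≠ 0 := by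
      have : 0 < h (φ t) := div_pos hgφ hfφ
      exact this.ne'
    have hdval : d = g t / f t * (f (φ t) / g (φ t)) := by
      have : d = h t / h (φ t) := by
        field_simp at huniq ⊢
        linarith [huniq]
      rw [this, hh]
      field_simp
    have hneg : g t / f t * (f (φ t) / g (φ t)) < 0 :=
      mul_neg_of_neg_of_pos (div_neg_of_neg_of_pos hgt hft) (div_pos hfφ hgφ)
    exact ⟨hint0, hdval ▸ hdφ, hneg⟩
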